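/- arXiv:math/0508570 — 2 statements merged into one kernel-verified Lean document; each statement's English description precedes it below -/
import Mathlib

section
/- For all integers n ≥ 1 and all k with 0 ≤ k ≤ n, (k+1)·R_{k,2n+1} = (binom(n,k))²·((n+1)!)². -/
namespace DescentParity

/-- Number of descent positions i (1-indexed adjacent pairs) of a permutation of {1,…,m}
    whose first (larger) entry is even. Entries of `Fin m` represent values via `(·:ℕ)+1`. -/
def desBegE (m : ℕ) (σ : Equiv.Perm (Fin m)) : ℕ :=
  (Finset.univ.filter (fun p : Fin m × Fin m =>
    (p.2 : ℕ) = (p.1 : ℕ) + 1 ∧ σ p.2 < σ p.1 ∧ Even ((σ p.1 : ℕ) + 1))).card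

def desEndE (m : ℕ) (σ : Equiv.Perm (Fin m)) : ℕ :=
  (Finset.univ.filter (fun p : Fin m × Fin m =>
    (p.2 : ℕ) = (p.1 : ℕ) + 1 ∧ σ p.2 < σ p.1 ∧ Even ((σ p.2 : ℕ) + 1))).card

def desBegO (m : ℕ) (σ : Equiv.Perm (Fin m)) : ℕ :=
  (Finset.univ.filter (fun p : Fin m × Fin m =>
    (p.2 : ℕ) = (p.1 : ℕ) + 1 ∧ σ p.2 < σ p.1 ∧ Odd ((σ p.1 : ℕ) + 1))).card

def desEndO (m : ℕ) (σ : Equiv.Perm (Fin m)) : ℕ :=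
  (Finset.univ.filter (fun p : Fin m × Fin m =>
    (p.2 : ℕ) = (p.1 : ℕ) + 1 ∧ σ p.2 < σ p.1 ∧ Odd ((σ p.2 : ℕ) + 1))).card

/-- The first entry σ₁ of the permutation is even. -/
def firstEven (m : ℕ) (σ : Equiv.Perm (Fin m)) : Prop :=
  ∃ i : Fin m, (i : ℕ) = 0 ∧ Even ((σ i : ℕ) + 1)

def firstOdd (m : ℕ) (σ : Equiv.Perm (Fin m)) : Prop :=
  ∃ i : Fin m, (i : ℕ) = 0 ∧ Odd ((σ i : ℕ) + 1)

instance (m : ℕ) (σ : Equiv.Perm (Fin m)) : Decidable (firstEven m σ) := by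
  unfold firstEven; infer_instance

instance (m : ℕ) (σ : Equiv.Perm (Fin m)) : Decidable (firstOdd m σ) := by
  unfold firstOdd; infer_instance

def R (k m : ℕ) : ℕ :=
  (Finset.univ.filter (fun σ : Equiv.Perm (Fin m) => desBegE m σ = k)).card

def M (k m : ℕ) : ℕ :=
  (Finset.univ.filter (fun σ : Equiv.Perm (Fin m) => desBegO m σ = k)).card

def P0 (k m : ℕ) : ℕ :=
  (Finset.univ.filter (fun σ : Equiv.Perm (Fin m) => firstOdd m σ ∧ desEndE m σ = k)).card

def P1 (k m : ℕ) : ℕ :=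
  (Finset.univ.filter (fun σ : Equiv.Perm (Fin m) => firstEven m σ ∧ desEndE m σ = k)).card

def Q0 (k m : ℕ) : ℕ :=
  (Finset.univ.filter (fun σ : Equiv.Perm (Fin m) => firstEven m σ ∧ desEndO m σ = k)).card

def Q1 (k m : ℕ) : ℕ :=
  (Finset.univ.filter (fun σ : Equiv.Perm (Fin m) => firstOdd m σ ∧ desEndO m σ = k)).card


/-! ### List-level descent statistic -/

/-- number of adjacent descents with "even top" (entry `a` represents value `a+1`). -/
def dE : List ℕ → ℕ
  | a :: b :: t => (if b < a ∧ Even (a+1) then 1 else 0) + dE (b :: t)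
  | _ => 0

def hp (a : ℕ) (t : List ℕ) : ℕ :=
  if 0 < t.length ∧ t.getD 0 0 < a ∧ Even (a+1) then 1 else 0

lemma dE_cons (a : ℕ) (t : List ℕ) : dE (a :: t) = hp a t + dE t := by
  cases t with
  | nil => simp [dE, hp]
  | cons b u => simp [dE, hp]

/-- position `p` (between 1 and length-1) is the index directly after an even-top descent -/
def D (l : List ℕ) (p : ℕ) : Prop :=
  0 < p ∧ p < l.length ∧ l.getD p 0 < l.getD (p-1) 0 ∧ Even (l.getD (p-1) 0 + 1)

instance (l : List ℕ) (p : ℕ) : Decidable (D l p) := by unfold D; infer_instance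

lemma not_D_zero (l : List ℕ) : ¬ D l 0 := fun h => absurd h.1 (lt_irrefl 0)

lemma not_D_of_le (l : List ℕ) (p : ℕ) (h : l.length ≤ p) : ¬ D l p :=
  fun hD => absurd hD.2.1 (not_lt.2 h)

lemma D_lt_length {l : List ℕ} {p : ℕ} (h : D l p) : p < l.length := h.2.1

lemma D_one_iff (a : ℕ) (t : List ℕ) :
    D (a :: t) 1 ↔ (0 < t.length ∧ t.getD 0 0 < a ∧ Even (a+1)) := by
  unfold D
  simp only [List.length_cons, Nat.sub_self, List.getD_cons_zero, List.getD_cons_succ]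
  constructor
  · rintro ⟨-, h2, h3, h4⟩
    refine ⟨by omega, ?_, h4⟩
    simpa using h3
  · rintro ⟨h2, h3, h4⟩
    exact ⟨Nat.one_pos, by omega, by simpa using h3, h4⟩

lemma D_succ_succ (a : ℕ) (t : List ℕ) (q : ℕ) : D (a :: t) (q+2) ↔ D t (q+1) := by
  unfold D
  have h1 : q + 2 - 1 = q + 1 := rfl
  have h2 : q + 1 - 1 = q := rfl
  rw [h1, h2]
  simp only [List.getD_cons_succ, List.length_cons]
  constructor
  · rintro ⟨-, h, h3, h4⟩; exact ⟨by omega, by omega, h3, h4⟩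
  · rintro ⟨-, h, h3, h4⟩; exact ⟨by omega, by omega, h3, h4⟩

lemma hp_eq_ite_D_one (a : ℕ) (t : List ℕ) :
    hp a t = if D (a :: t) 1 then 1 else 0 := by
  rw [if_congr (D_one_iff a t) rfl rfl]; rfl

/-- counting the positions where `D` holds recovers `dE`. -/
lemma posCount (l : List ℕ) :
    ((Finset.range (l.length + 1)).filter (fun p => D l p)).card = dE l := by
  induction l with
  | nil => simp [not_D_zero, not_D_of_le, Finset.filter_eq_empty_iff, dE]
  | cons a t ih =>
      rw [Finset.card_filter]
      have hlen : (a :: t).length + 1 = t.length + 1 + 1 := rfl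
      rw [hlen, Finset.sum_range_succ']
      have h0 : (if D (a :: t) 0 then 1 else 0) = 0 := by simp [not_D_zero]
      rw [h0, add_zero, Finset.sum_range_succ']
      have h1 : (if D (a :: t) (0+1) then 1 else 0) = hp a t := by
        rw [hp_eq_ite_D_one]
      have h2 : ∀ p, (if D (a :: t) (p + 1 + 1) then 1 else 0) = (if D t (p+1) then 1 else 0) := by
        intro p
        exact if_congr (D_succ_succ a t p) rfl rfl
      calc (∑ p ∈ Finset.range t.length, if D (a :: t) (p + 1 + 1) then 1 else 0)
            + (if D (a :: t) (0+1) then 1 else 0)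
          = (∑ p ∈ Finset.range t.length, if D t (p+1) then 1 else 0) + hp a t := by
            rw [h1]; congr 1; exact Finset.sum_congr rfl (fun p _ => h2 p)
        _ = hp a t + dE t := by
            rw [← ih, Finset.card_filter, Finset.sum_range_succ']
            simp [not_D_zero]
            ring
        _ = dE (a :: t) := (dE_cons a t).symm

/-- The key insertion lemma. -/
lemma dE_insertIdx (x : ℕ) (p : ℕ) : ∀ (l : List ℕ), p ≤ l.length → (∀ a ∈ l, a < x) →
    dE (l.insertIdx p x) + (if D l p then 1 else 0)
      = dE l + (if p < l.length ∧ Even (x+1) then 1 else 0) := by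
  induction p with
  | zero =>
      intro l _ hb
      rw [List.insertIdx_zero, dE_cons]
      have hD : ¬ D l 0 := not_D_zero l
      cases l with
      | nil => simp [hp, dE, hD]
      | cons b u =>
          have hbx : b < x := hb b (by simp)
          by_cases hE : Even (x+1) <;>
            simp [hp, hD, hbx, hE] <;> omega
  | succ q ih =>
      intro l hl hb
      cases l with
      | nil => simp at hl
      | cons a t =>
          have hql : q ≤ t.length := by simpa using hl
          have hbt : ∀ b ∈ t, b < x := fun b hbm => hb b (List.mem_cons_of_mem a hbm)
          have ihq := ih t hql hbt
          rw [List.insertIdx_succ_cons, dE_cons, dE_cons]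
          have key : hp a (t.insertIdx q x) + (if D (a :: t) (q+1) then 1 else 0)
                   = hp a t + (if D t q then 1 else 0) := by
            cases q with
            | zero =>
                rw [List.insertIdx_zero]
                have hax : a < x := hb a (by simp)
                have h1 : hp a (x :: t) = 0 := by
                  simp [hp, not_lt.2 hax.le]
                rw [h1, hp_eq_ite_D_one]
                simp [not_D_zero]
            | succ r =>
                have hrt : r + 1 ≤ t.length := hql
                cases t with
                | nil => simp at hrt
                | cons b u =>
                    have h1 : hp a ((b :: u).insertIdx (r+1) x) = hp a (b :: u) := by
                      rw [List.insertIdx_succ_cons]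
                      simp [hp]
                    rw [h1]
                    congr 1
                    exact if_congr (D_succ_succ a (b :: u) r) rfl rfl
          have hlen : ((q+1 < (a :: t).length) ∧ Even (x+1)) ↔ ((q < t.length) ∧ Even (x+1)) := by
            simp only [List.length_cons]
            constructor
            · rintro ⟨h, h'⟩; exact ⟨by omega, h'⟩
            · rintro ⟨h, h'⟩; exact ⟨by omega, h'⟩
          rw [if_congr hlen rfl rfl]
          omega


/-- Finset of all permutation-lists of `List.range m`, built by inserting the max. -/
def permsL : ℕ → Finset (List ℕ)
  | 0 => {([] : List ℕ)}
  | m+1 => ((Finset.range (m+1)) ×ˢ permsL m).image (fun q => q.2.insertIdx q.1 m)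

lemma mem_permsL : ∀ (m : ℕ) (l : List ℕ), l ∈ permsL m ↔ l.Perm (List.range m) := by
  intro m
  induction m with
  | zero => intro l; simp [permsL, List.range_zero]
  | succ m ih =>
      intro l
      constructor
      · intro hl
        simp only [permsL, Finset.mem_image, Finset.mem_product, Finset.mem_range] at hl
        obtain ⟨⟨p, l'⟩, ⟨hp, hl'⟩, rfl⟩ := hl
        have hperm : l'.Perm (List.range m) := (ih l').1 hl'
        have hlen : l'.length = m := hperm.length_eq.trans (List.length_range (n := m))
        have h1 : (l'.insertIdx p m).Perm (m :: l') :=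
          List.perm_insertIdx m l' (by omega)
        refine h1.trans ?_
        have h2 : (m :: l').Perm (m :: List.range m) := hperm.cons m
        refine h2.trans ?_
        rw [List.range_succ]
        exact (List.perm_append_singleton m (List.range m)).symm
      · intro hl
        have hm : m ∈ l := hl.mem_iff.2 (by simp [List.range_succ])
        have hnd : l.Nodup := hl.symm.nodup (List.nodup_range (n := m+1))
        have herase : (l.erase m).Perm (List.range m) := by
          have h1 : (l.erase m).Perm ((List.range (m+1)).erase m) := hl.erase m
          rw [List.range_succ, List.erase_append_right _ (by simp), List.erase_cons_head] at h1
          simpa using h1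
        have hrec : (l.erase m).insertIdx (List.idxOf m l) m = l := by
          clear herase hl hnd
          induction l with
          | nil => simp at hm
          | cons b u ihl =>
              by_cases hbm : b = m
              · subst hbm
                rw [List.idxOf_cons_self, List.erase_cons_head, List.insertIdx_zero]
              · have hmu : m ∈ u := by
                  rcases List.mem_cons.1 hm with h | h
                  · exact absurd h.symm hbm
                  · exact h
                rw [List.idxOf_cons_ne _ (Ne.intro hbm), List.erase_cons_tail (by simpa using hbm)]
                rw [Nat.succ_eq_add_one, List.insertIdx_succ_cons, ihl hmu]
        simp only [permsL, Finset.mem_image, Finset.mem_product, Finset.mem_range]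
        refine ⟨(List.idxOf m l, l.erase m), ⟨?_, (ih _).2 herase⟩, hrec⟩
        have := List.idxOf_lt_length_iff.2 hm
        have hlen : l.length = m + 1 := hl.length_eq.trans (List.length_range (n := m+1))
        omega

lemma length_of_mem_permsL {m : ℕ} {l : List ℕ} (h : l ∈ permsL m) : l.length = m :=
  ((mem_permsL m l).1 h).length_eq.trans (List.length_range (n := m))

lemma lt_of_mem_of_mem_permsL {m : ℕ} {l : List ℕ} (h : l ∈ permsL m) {a : ℕ} (ha : a ∈ l) :
    a < m := by
  have := ((mem_permsL m l).1 h).mem_iff.1 ha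
  simpa using this

lemma indexOf_insertIdx (x : ℕ) : ∀ (p : ℕ) (l : List ℕ), p ≤ l.length → x ∉ l →
    List.idxOf x (l.insertIdx p x) = p := by
  intro p
  induction p with
  | zero => intro l _ _; rw [List.insertIdx_zero, List.idxOf_cons_self]
  | succ q ih =>
      intro l hl hx
      cases l with
      | nil => simp at hl
      | cons a t =>
          have hax : a ≠ x := fun h => hx (h ▸ List.mem_cons_self (a := a) (l := t))
          rw [List.insertIdx_succ_cons, List.idxOf_cons_ne _ hax,
            ih t (by simpa using hl) (fun h => hx (List.mem_cons_of_mem a h))]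

lemma insert_injOn (m : ℕ) :
    Set.InjOn (fun q : ℕ × List ℕ => q.2.insertIdx q.1 m) ↑((Finset.range (m+1)) ×ˢ permsL m) := by
  rintro ⟨p₁, l₁⟩ h₁ ⟨p₂, l₂⟩ h₂ heq
  simp only [Finset.coe_product, Set.mem_prod, Finset.mem_coe, Finset.mem_range] at h₁ h₂
  obtain ⟨hp₁, hl₁⟩ := h₁
  obtain ⟨hp₂, hl₂⟩ := h₂
  have hlen₁ : l₁.length = m := length_of_mem_permsL hl₁
  have hlen₂ : l₂.length = m := length_of_mem_permsL hl₂
  have hx₁ : m ∉ l₁ := fun h => lt_irrefl m (lt_of_mem_of_mem_permsL hl₁ h)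
  have hx₂ : m ∉ l₂ := fun h => lt_irrefl m (lt_of_mem_of_mem_permsL hl₂ h)
  simp only at heq
  have hpp : p₁ = p₂ := by
    rw [← indexOf_insertIdx m p₁ l₁ (by omega) hx₁, ← indexOf_insertIdx m p₂ l₂ (by omega) hx₂,
      heq]
  have hll : l₁ = l₂ := by
    rw [← List.eraseIdx_insertIdx_self (i := p₁) (l := l₁) m, ← List.eraseIdx_insertIdx_self (i := p₂) (l := l₂) m,
      heq, hpp]
  rw [hpp, hll]




lemma inner_eval (m k : ℕ) (l : List ℕ) (hl : l.length = m) (hb : ∀ a ∈ l, a < m) :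
    ((Finset.range (m+1)).filter (fun p => dE (l.insertIdx p m) = k)).card
    = if Even (m+1)
      then (if dE l = k then dE l + 1 else if dE l + 1 = k then m - dE l else 0)
      else (if dE l = k then (m+1) - dE l else if dE l = k + 1 then dE l else 0) := by
  have hDmm : ¬ D l m := not_D_of_le l m (le_of_eq hl)
  have hD_card : ((Finset.range (m+1)).filter (fun p => D l p)).card = dE l := by
    have := posCount l; rw [hl] at this; exact this
  have hfilter_eq : (Finset.range (m+1)).filter (fun p => D l p)
      = (Finset.range m).filter (fun p => D l p) := by
    rw [Finset.range_add_one, Finset.filter_insert, if_neg hDmm]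
  have hDm_card : ((Finset.range m).filter (fun p => D l p)).card = dE l := by
    rw [← hfilter_eq, hD_card]
  have hnotD : ((Finset.range (m+1)).filter (fun p => ¬ D l p)).card = m + 1 - dE l := by
    have h := Finset.card_filter_add_card_filter_not (s := Finset.range (m+1))
      (fun p => D l p)
    rw [hD_card, Finset.card_range] at h
    omega
  have hnotDm : ((Finset.range m).filter (fun p => ¬ D l p)).card = m - dE l := by
    have h := Finset.card_filter_add_card_filter_not (s := Finset.range m)
      (fun p => D l p)
    rw [hDm_card, Finset.card_range] at h
    omega
  have hkey : ∀ p, p ≤ m → (dE (l.insertIdx p m) = k ↔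
      dE l + (if p < m ∧ Even (m+1) then 1 else 0) = k + (if D l p then 1 else 0)) := by
    intro p hp
    have h := dE_insertIdx m p l (by omega) hb
    rw [hl] at h
    constructor <;> intro h' <;> omega
  by_cases hE : Even (m+1)
  · rw [if_pos hE]
    have hone : ∀ p, p < m → (if p < m ∧ Even (m+1) then 1 else 0) = 1 := by
      intro p hp; simp [hp, hE]
    by_cases h1 : dE l = k
    · rw [if_pos h1]
      have hmtrue : dE (l.insertIdx m m) = k := by
        rw [hkey m le_rfl]; simp [hDmm, h1]
      have hset : (Finset.range (m+1)).filter (fun p => dE (l.insertIdx p m) = k)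
          = insert m ((Finset.range m).filter (fun p => D l p)) := by
        rw [Finset.range_add_one, Finset.filter_insert, if_pos hmtrue]
        congr 1
        apply Finset.filter_congr
        intro p hpm
        have hpm' : p < m := Finset.mem_range.1 hpm
        rw [hkey p (le_of_lt hpm'), hone p hpm']
        by_cases hD : D l p <;> simp [hD] <;> omega
      rw [hset, Finset.card_insert_of_notMem (by simp), hDm_card, h1]
    · by_cases h2 : dE l + 1 = k
      · rw [if_neg h1, if_pos h2]
        have hmfalse : ¬ dE (l.insertIdx m m) = k := by
          rw [hkey m le_rfl]; simp [hDmm]; omega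
        have hset : (Finset.range (m+1)).filter (fun p => dE (l.insertIdx p m) = k)
            = (Finset.range m).filter (fun p => ¬ D l p) := by
          rw [Finset.range_add_one, Finset.filter_insert, if_neg hmfalse]
          apply Finset.filter_congr
          intro p hpm
          have hpm' : p < m := Finset.mem_range.1 hpm
          rw [hkey p (le_of_lt hpm'), hone p hpm']
          by_cases hD : D l p <;> simp [hD] <;> omega
        rw [hset, hnotDm]
      · rw [if_neg h1, if_neg h2]
        rw [Finset.card_eq_zero, Finset.filter_eq_empty_iff]
        intro p hpm
        have hpm' : p ≤ m := by have := Finset.mem_range.1 hpm; omega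
        rw [hkey p hpm']
        by_cases hD : D l p
        · have hplt : p < m := by have := hD.2.1; omega
          rw [hone p hplt]
          simp only [hD, if_pos]
          omega
        · by_cases hplt : p < m
          · rw [hone p hplt]
            simp only [hD, if_neg, not_false_iff]
            omega
          · have hz : (if p < m ∧ Even (m+1) then 1 else 0) = 0 := by simp [hplt]
            rw [hz]
            simp only [hD, if_neg, not_false_iff]
            omega
  · rw [if_neg hE]
    have hzero : ∀ p, (if p < m ∧ Even (m+1) then 1 else 0) = 0 := by
      intro p; simp [hE]
    by_cases h1 : dE l = k
    · rw [if_pos h1]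
      have hset : (Finset.range (m+1)).filter (fun p => dE (l.insertIdx p m) = k)
          = (Finset.range (m+1)).filter (fun p => ¬ D l p) := by
        apply Finset.filter_congr
        intro p hpm
        have hpm' : p ≤ m := by have := Finset.mem_range.1 hpm; omega
        rw [hkey p hpm', hzero p]
        by_cases hD : D l p <;> simp [hD] <;> omega
      rw [hset, hnotD, h1]
    · by_cases h2 : dE l = k + 1
      · rw [if_neg h1, if_pos h2]
        have hset : (Finset.range (m+1)).filter (fun p => dE (l.insertIdx p m) = k)
            = (Finset.range (m+1)).filter (fun p => D l p) := by
          apply Finset.filter_congr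
          intro p hpm
          have hpm' : p ≤ m := by have := Finset.mem_range.1 hpm; omega
          rw [hkey p hpm', hzero p]
          by_cases hD : D l p <;> simp [hD] <;> omega
        rw [hset, hD_card]
      · rw [if_neg h1, if_neg h2]
        rw [Finset.card_eq_zero, Finset.filter_eq_empty_iff]
        intro p hpm
        have hpm' : p ≤ m := by have := Finset.mem_range.1 hpm; omega
        rw [hkey p hpm', hzero p]
        by_cases hD : D l p <;> simp [hD] <;> omega

def cnt (k m : ℕ) : ℕ := ((permsL m).filter (fun l => dE l = k)).card

lemma cnt_succ_sum (m k : ℕ) : cnt k (m+1)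
    = ∑ l ∈ permsL m, ((Finset.range (m+1)).filter (fun p => dE (l.insertIdx p m) = k)).card := by
  unfold cnt
  rw [show permsL (m+1)
      = ((Finset.range (m+1)) ×ˢ permsL m).image (fun q => q.2.insertIdx q.1 m) from rfl]
  rw [Finset.filter_image,
    Finset.card_image_of_injOn ((insert_injOn m).mono (by
      intro q hq
      exact Finset.mem_coe.2 (Finset.mem_of_mem_filter _ (Finset.mem_coe.1 hq))))]
  rw [Finset.card_filter, Finset.sum_product, Finset.sum_comm]
  refine Finset.sum_congr rfl (fun l _ => ?_)
  rw [Finset.card_filter]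

lemma sum_two_ite (s : Finset (List ℕ)) (f : List ℕ → ℕ) (k₁ k₂ A B : ℕ) (h : k₁ ≠ k₂) :
    (∑ l ∈ s, if f l = k₁ then A else if f l = k₂ then B else 0)
    = A * (s.filter (fun l => f l = k₁)).card + B * (s.filter (fun l => f l = k₂)).card := by
  have hsplit : ∀ l, (if f l = k₁ then A else if f l = k₂ then B else 0)
      = (if f l = k₁ then A else 0) + (if f l = k₂ then B else 0) := by
    intro l
    by_cases h1 : f l = k₁
    · by_cases h2 : f l = k₂
      · exact absurd (h1.symm.trans h2) h
      · simp [h1, h2, h]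
    · simp [h1]
  rw [Finset.sum_congr rfl (fun l _ => hsplit l), Finset.sum_add_distrib]
  congr 1 <;> rw [← Finset.sum_filter, Finset.sum_const, smul_eq_mul, mul_comm]

lemma cnt_rec_odd (m k : ℕ) (hm : ¬ Even (m+1)) :
    cnt k (m+1) = (m+1-k) * cnt k m + (k+1) * cnt (k+1) m := by
  rw [cnt_succ_sum]
  have hstep : ∀ l ∈ permsL m,
      ((Finset.range (m+1)).filter (fun p => dE (l.insertIdx p m) = k)).card
      = if dE l = k then (m+1)-k else if dE l = k+1 then k+1 else 0 := by
    intro l hl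
    rw [inner_eval m k l (length_of_mem_permsL hl)
      (fun a ha => lt_of_mem_of_mem_permsL hl ha), if_neg hm]
    by_cases h1 : dE l = k <;> by_cases h2 : dE l = k+1 <;> simp [h1, h2] <;> omega
  rw [Finset.sum_congr rfl hstep, sum_two_ite _ _ _ _ _ _ (by omega)]
  rfl

lemma cnt_rec_even0 (m : ℕ) (hm : Even (m+1)) : cnt 0 (m+1) = cnt 0 m := by
  rw [cnt_succ_sum]
  have hstep : ∀ l ∈ permsL m,
      ((Finset.range (m+1)).filter (fun p => dE (l.insertIdx p m) = 0)).card
      = if dE l = 0 then 1 else 0 := by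
    intro l hl
    rw [inner_eval m 0 l (length_of_mem_permsL hl)
      (fun a ha => lt_of_mem_of_mem_permsL hl ha), if_pos hm]
    by_cases h1 : dE l = 0 <;> simp [h1] <;> omega
  rw [Finset.sum_congr rfl hstep, ← Finset.sum_filter, Finset.sum_const, smul_eq_mul, mul_one]
  rfl

lemma cnt_rec_even (m j : ℕ) (hm : Even (m+1)) :
    cnt (j+1) (m+1) = (j+2) * cnt (j+1) m + (m-j) * cnt j m := by
  rw [cnt_succ_sum]
  have hstep : ∀ l ∈ permsL m,
      ((Finset.range (m+1)).filter (fun p => dE (l.insertIdx p m) = (j+1))).card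
      = if dE l = j+1 then j+2 else if dE l = j then m-j else 0 := by
    intro l hl
    rw [inner_eval m (j+1) l (length_of_mem_permsL hl)
      (fun a ha => lt_of_mem_of_mem_permsL hl ha), if_pos hm]
    by_cases h1 : dE l = j+1 <;> by_cases h2 : dE l = j <;> simp [h1, h2] <;> omega
  rw [Finset.sum_congr rfl hstep, sum_two_ite _ _ _ _ _ _ (by omega)]
  rfl




def listOf (m : ℕ) (σ : Equiv.Perm (Fin m)) : List ℕ :=
  (List.finRange m).map (fun i => ((σ i : ℕ)))

lemma length_listOf (m : ℕ) (σ : Equiv.Perm (Fin m)) : (listOf m σ).length = m := by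
  simp [listOf]

lemma getD_listOf (m : ℕ) (σ : Equiv.Perm (Fin m)) (i : ℕ) (h : i < m) :
    (listOf m σ).getD i 0 = (σ ⟨i, h⟩ : ℕ) := by
  have hlen : i < (listOf m σ).length := by rwa [length_listOf]
  rw [List.getD_eq_getElem _ _ hlen]
  simp only [listOf, List.getElem_map, List.getElem_finRange]
  congr 1

lemma desBegE_eq_dE (m : ℕ) (σ : Equiv.Perm (Fin m)) : desBegE m σ = dE (listOf m σ) := by
  have hpc := posCount (listOf m σ)
  rw [length_listOf] at hpc
  rw [← hpc]
  unfold desBegE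
  apply Finset.card_bij (fun q _ => (q.1 : ℕ) + 1)
  · rintro ⟨q₁, q₂⟩ hq
    simp only [Finset.mem_filter, Finset.mem_univ, true_and] at hq
    obtain ⟨c1, c2, c3⟩ := hq
    dsimp only
    have hq2 : (q₂ : ℕ) < m := q₂.isLt
    have hq1 : (q₁ : ℕ) + 1 < m := by omega
    rw [Finset.mem_filter, Finset.mem_range]
    refine ⟨by omega, ?_⟩
    have hq2eq : q₂ = ⟨(q₁:ℕ)+1, hq1⟩ := Fin.ext c1
    refine ⟨Nat.succ_pos _, by rw [length_listOf]; omega, ?_, ?_⟩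
    · rw [Nat.add_sub_cancel, getD_listOf m σ _ hq1,
        getD_listOf m σ _ (by omega : (q₁:ℕ) < m)]
      have e1 : σ ⟨(q₁:ℕ)+1, hq1⟩ = σ q₂ := congrArg σ hq2eq.symm
      have e2 : σ ⟨(q₁:ℕ), by omega⟩ = σ q₁ := congrArg σ (Fin.eta q₁ _)
      rw [e1, e2]
      exact c2
    · rw [Nat.add_sub_cancel, getD_listOf m σ _ (by omega : (q₁:ℕ) < m)]
      have e2 : σ ⟨(q₁:ℕ), by omega⟩ = σ q₁ := congrArg σ (Fin.eta q₁ _)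
      rw [e2]
      exact c3
  · rintro ⟨q₁, q₂⟩ h₁ ⟨r₁, r₂⟩ h₂ heq
    simp only [Finset.mem_filter, Finset.mem_univ, true_and] at h₁ h₂
    dsimp only at heq h₁ h₂
    have e1 : (q₁ : ℕ) = (r₁ : ℕ) := by omega
    have e2 : (q₂ : ℕ) = (r₂ : ℕ) := by
      have := h₁.1
      have := h₂.1
      omega
    exact Prod.ext (Fin.ext e1) (Fin.ext e2)
  · intro p hp
    rw [Finset.mem_filter, Finset.mem_range] at hp
    obtain ⟨hpm, hD⟩ := hp
    obtain ⟨hD0, hDlen, hDlt, hDev⟩ := hD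
    rw [length_listOf] at hDlen
    refine ⟨(⟨p-1, by omega⟩, ⟨p, by omega⟩), ?_, by dsimp only; omega⟩
    rw [Finset.mem_filter]
    rw [getD_listOf m σ p (by omega), getD_listOf m σ (p-1) (by omega)] at hDlt
    rw [getD_listOf m σ (p-1) (by omega)] at hDev
    exact ⟨Finset.mem_univ _, by dsimp only; omega, hDlt, hDev⟩

lemma listOf_perm_range (m : ℕ) (σ : Equiv.Perm (Fin m)) :
    (listOf m σ).Perm (List.range m) := by
  apply List.perm_of_nodup_nodup_toFinset_eq
  · exact (List.nodup_finRange m).map (fun i j hij => σ.injective (Fin.val_injective hij))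
  · exact List.nodup_range (n := m)
  · ext a
    simp only [List.mem_toFinset, listOf, List.mem_map, List.mem_finRange, true_and,
      List.mem_range]
    constructor
    · rintro ⟨i, rfl⟩; exact (σ i).isLt
    · intro ha
      exact ⟨σ.symm ⟨a, ha⟩, by simp⟩

lemma R_eq_cnt (k m : ℕ) : R k m = cnt k m := by
  unfold R cnt
  apply Finset.card_bij (fun σ _ => listOf m σ)
  · intro σ hσ
    rw [Finset.mem_filter] at hσ ⊢
    refine ⟨(mem_permsL m _).2 (listOf_perm_range m σ), ?_⟩
    rw [← desBegE_eq_dE]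
    exact hσ.2
  · intro σ hσ τ hτ heq
    have : ∀ i : Fin m, σ i = τ i := by
      intro i
      have := List.map_inj_left.1 heq i (List.mem_finRange i)
      exact Fin.ext this
    exact Equiv.ext this
  · intro l hl
    rw [Finset.mem_filter] at hl
    obtain ⟨hmem, hdE⟩ := hl
    have hperm : l.Perm (List.range m) := (mem_permsL m l).1 hmem
    have hlen : l.length = m := hperm.length_eq.trans (List.length_range (n := m))
    have hnd : l.Nodup := hperm.symm.nodup (List.nodup_range (n := m))
    have hbound : ∀ i : Fin m, l.get (Fin.cast hlen.symm i) < m := by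
      intro i
      have hmem' : l.get (Fin.cast hlen.symm i) ∈ l := l.get_mem _
      have := hperm.mem_iff.1 hmem'
      simpa using this
    let f : Fin m → Fin m := fun i => ⟨l.get (Fin.cast hlen.symm i), hbound i⟩
    have hinj : Function.Injective f := by
      intro i j hij
      have : l.get (Fin.cast hlen.symm i) = l.get (Fin.cast hlen.symm j) := by
        simpa [f, Fin.ext_iff] using hij
      have := (hnd.get_inj_iff).1 this
      simpa [Fin.ext_iff] using this
    let σ : Equiv.Perm (Fin m) := Equiv.ofBijective f (Finite.injective_iff_bijective.1 hinj)
    have hlist : listOf m σ = l := by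
      apply List.ext_get (by rw [length_listOf, hlen])
      intro i h₁ h₂
      have h₁' : i < m := by rwa [length_listOf] at h₁
      have e1 : (listOf m σ).get ⟨i, h₁⟩ = (listOf m σ).getD i 0 := by
        rw [List.getD_eq_getElem _ _ h₁, List.get_eq_getElem]
      have e2 : l.get ⟨i, h₂⟩ = l.getD i 0 := by
        rw [List.getD_eq_getElem _ _ h₂, List.get_eq_getElem]
      rw [e1, e2, getD_listOf m σ i h₁']
      have e3 : σ ⟨i, h₁'⟩ = f ⟨i, h₁'⟩ := Equiv.ofBijective_apply f _ _
      rw [e3]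
      show l.get (Fin.cast hlen.symm ⟨i, h₁'⟩) = l.getD i 0
      rw [List.getD_eq_getElem _ _ h₂, List.get_eq_getElem]
      rfl
    refine ⟨σ, ?_, hlist⟩
    rw [Finset.mem_filter]
    exact ⟨Finset.mem_univ _, by rw [desBegE_eq_dE, hlist, hdE]⟩


lemma permsL_one : permsL 1 = {([0] : List ℕ)} := by
  show ((Finset.range 1) ×ˢ permsL 0).image (fun q => q.2.insertIdx q.1 0) = {[0]}
  rw [show permsL 0 = {([] : List ℕ)} from rfl, Finset.range_one,
    Finset.singleton_product_singleton, Finset.image_singleton]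
  rfl

lemma cnt_one_zero : cnt 0 1 = 1 := by
  unfold cnt
  rw [permsL_one, Finset.filter_singleton, if_pos (by rfl)]
  rfl

lemma cnt_one_succ (j : ℕ) : cnt (j+1) 1 = 0 := by
  unfold cnt
  rw [permsL_one, Finset.filter_singleton, if_neg (by simp [dE])]
  rfl



def F (n j : ℕ) : ℕ :=
  Nat.choose n j * Nat.choose (n+1) (j+1) * n.factorial * (n+1).factorial

lemma ID0 (n : ℕ) :
    (2*n+3) * F n 0 + 1 * (2 * F n 1 + (2*n+1) * F n 0) = F (n+1) 0 := by
  have h2 : Nat.choose (n+1) 2 * 2 = (n+1) * n := by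
    have h := Nat.add_one_mul_choose_eq n 1
    norm_num [Nat.choose_one_right] at h
    omega
  unfold F
  simp only [Nat.choose_zero_right, zero_add, Nat.choose_one_right, Nat.factorial_succ]
  zify at h2 ⊢
  linear_combination ((n:ℤ) * n.factorial * ((n+1) * n.factorial)) * h2

lemma ID1 (n k : ℕ) :
    (2*n+2-k) * ((k+2) * F n (k+1) + (2*n+1-k) * F n k)
      + (k+2) * ((k+3) * F n (k+2) + (2*n-k) * F n (k+1)) = F (n+1) (k+1) := by
  rcases lt_trichotomy k n with hk | heq | hk
  · -- main case k < n
    have hkn : k ≤ n := le_of_lt hk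
    have hk1n : k + 1 ≤ n := hk
    have f1 := Nat.add_one_mul_choose_eq n k
    have f2 := Nat.add_one_mul_choose_eq n (k+1)
    have f3 := Nat.add_one_mul_choose_eq n (k+2)
    have f4 := Nat.add_one_mul_choose_eq (n+1) (k+1)
    have f5 := Nat.choose_succ_right_eq n k
    have f6 := Nat.choose_succ_right_eq n (k+1)
    unfold F
    simp only [Nat.factorial_succ]
    have hs1 : (2*n+2-k : ℕ) = 2*n+2-k := rfl
    qify [hkn, hk1n, (by omega : k ≤ 2*n), (by omega : k ≤ 2*n+1), (by omega : k ≤ 2*n+2)]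
      at f5 f6 ⊢
    have hk1 : ((k:ℚ)+1) ≠ 0 := by positivity
    have hk2 : ((k:ℚ)+2) ≠ 0 := by positivity
    have hk3 : ((k:ℚ)+3) ≠ 0 := by positivity
    have eY1 : (Nat.choose (n+1) (k+1) : ℚ) = (n+1) * Nat.choose n k / (k+1) := by
      rw [eq_div_iff hk1]; qify at f1; linarith
    have eY2 : (Nat.choose (n+1) (k+2) : ℚ) = (n+1) * Nat.choose n (k+1) / (k+2) := by
      rw [eq_div_iff hk2]; qify at f2; linarith
    have eY3 : (Nat.choose (n+1) (k+3) : ℚ) = (n+1) * Nat.choose n (k+2) / (k+3) := by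
      rw [eq_div_iff hk3]; qify at f3; linarith
    have eZ : (Nat.choose (n+2) (k+2) : ℚ) = (n+2) * Nat.choose (n+1) (k+1) / (k+2) := by
      rw [eq_div_iff hk2]; qify at f4; linarith
    have eX2 : (Nat.choose n (k+2) : ℚ) = Nat.choose n (k+1) * ((n:ℚ) - (k+1)) / (k+2) := by
      rw [eq_div_iff hk2]; linarith [f6]
    have eX1 : (Nat.choose n (k+1) : ℚ) = Nat.choose n k * ((n:ℚ) - k) / (k+1) := by
      rw [eq_div_iff hk1]; linarith [f5]
    rw [eZ, eY3, eY2, eY1, eX2, eX1]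
    field_simp
    ring
  · -- case k = n
    subst heq
    have e1 : 2*k+2-k = k+2 := by omega
    have e2 : 2*k+1-k = k+1 := by omega
    unfold F
    rw [e1, e2, Nat.choose_succ_self, Nat.choose_self,
      Nat.choose_eq_zero_of_lt (by omega : k < k+2)]
    rw [show Nat.choose (k+1) (k+1+1) = 0 from Nat.choose_succ_self (k+1),
      show Nat.choose (k+1) (k+1) = 1 from Nat.choose_self (k+1),
      show Nat.choose (k+1) (k+2+1) = 0 from Nat.choose_eq_zero_of_lt (by omega),
      show Nat.choose (k+1+1) (k+1+1) = 1 from Nat.choose_self (k+1+1)]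
    simp only [Nat.factorial_succ]
    ring
  · -- case n < k
    unfold F
    rw [Nat.choose_eq_zero_of_lt (by omega : n < k),
      Nat.choose_eq_zero_of_lt (by omega : n < k+1),
      Nat.choose_eq_zero_of_lt (by omega : n < k+2),
      Nat.choose_eq_zero_of_lt (by omega : n+1 < k+1)]
    simp

lemma not_even_odd (n : ℕ) : ¬ Even (2*n+2+1) := by
  rw [Nat.even_iff]; omega

lemma even_even (n : ℕ) : Even (2*n+1+1) := by
  rw [Nat.even_iff]; omega

lemma cnt_formula : ∀ n j : ℕ, cnt j (2*n+1) = F n j := by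
  intro n
  induction n with
  | zero =>
      intro j
      cases j with
      | zero => simpa [F] using cnt_one_zero
      | succ i =>
          rw [show 2*0+1 = 1 from rfl, cnt_one_succ i]
          simp [F, Nat.choose_eq_zero_of_lt]
  | succ n ih =>
      intro j
      have hstep : cnt j (2*(n+1)+1) = (2*n+3-j) * cnt j (2*n+2) + (j+1) * cnt (j+1) (2*n+2) := by
        have h := cnt_rec_odd (2*n+2) j (not_even_odd n)
        rw [show 2*(n+1)+1 = 2*n+2+1 by ring, h, show 2*n+2+1-j = 2*n+3-j by omega]
      rw [hstep]
      cases j with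
      | zero =>
          rw [cnt_rec_even0 (2*n+1) (even_even n), cnt_rec_even (2*n+1) 0 (even_even n)]
          rw [ih 0, ih 1]
          simp only [Nat.sub_zero]
          calc (2*n+3) * F n 0 + (0+1) * ((0+2) * F n 1 + (2*n+1) * F n 0)
              = (2*n+3) * F n 0 + 1 * (2 * F n 1 + (2*n+1) * F n 0) := by ring
            _ = F (n+1) 0 := ID0 n
      | succ i =>
          rw [cnt_rec_even (2*n+1) i (even_even n), cnt_rec_even (2*n+1) (i+1) (even_even n)]
          rw [ih i, ih (i+1), ih (i+2)]
          have e1 : 2*n+3-(i+1) = 2*n+2-i := by omega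
          have e2 : 2*n+1-i = 2*n+1-i := rfl
          have e3 : 2*n+1-(i+1) = 2*n-i := by omega
          rw [e1, e3]
          calc (2*n+2-i) * ((i+2) * F n (i+1) + (2*n+1-i) * F n i)
                + (i+1+1) * ((i+1+2) * F n (i+2) + (2*n-i) * F n (i+1))
              = (2*n+2-i) * ((i+2) * F n (i+1) + (2*n+1-i) * F n i)
                + (i+2) * ((i+3) * F n (i+2) + (2*n-i) * F n (i+1)) := by ring
            _ = F (n+1) (i+1) := ID1 n i



theorem stmt_4 (n k : ℕ) (hn : 1 ≤ n) (hk : k ≤ n) :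
    (k + 1) * R k (2*n+1) = (Nat.choose n k)^2 * (Nat.factorial (n+1))^2 := by
  rw [R_eq_cnt, cnt_formula n k]
  have f1 := Nat.add_one_mul_choose_eq n k
  unfold F
  simp only [Nat.factorial_succ]
  zify at f1 ⊢
  linear_combination (-((Nat.choose n k : ℤ)) * (n.factorial : ℤ)^2 * ((n:ℤ)+1)) * f1

end DescentParity
end

section
/- For all integers n ≥ 1 and all k ≥ 0, the coefficients P_{j,k,m} satisfy the recursions P_{0,k,2n+1} = (n+k+1)·P_{0,k,2n} + P_{1,k−1,2n} + (n−k+1)·P_{0,k−1,2n} and P_{1,k,2n+1} = (n+k+1)·P_{1,k,2n} + (n−k)·P_{1,k−1,2n}, where by convention P_{j,−1,m} = 0. -/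
namespace DescentParity

section Aux
open Finset Equiv

open Finset Equiv


def pv {m : ℕ} (j : Fin m) : Fin m := ⟨(j : ℕ) - 1, lt_of_le_of_lt (Nat.sub_le _ _) j.2⟩

def Sd (m : ℕ) (τ : Equiv.Perm (Fin m)) : Finset (Fin m) :=
  Finset.univ.filter (fun j => 0 < (j : ℕ) ∧ τ j < τ (pv j) ∧ Even ((τ j : ℕ) + 1))


lemma desEndE_eq_card_Sd (m : ℕ) (τ : Equiv.Perm (Fin m)) :
    desEndE m τ = (Sd m τ).card := by
  unfold desEndE Sd
  refine Finset.card_nbij' (fun p => p.2) (fun j => (pv j, j)) ?_ ?_ ?_ ?_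
  · intro p hp
    simp only [Finset.mem_coe, mem_filter, mem_univ, true_and] at hp ⊢
    obtain ⟨h1, h2, h3⟩ := hp
    have hpv : pv p.2 = p.1 := by apply Fin.ext; simp [pv, h1]
    exact ⟨by omega, by rw [hpv]; exact h2, h3⟩
  · intro j hj
    simp only [Finset.mem_coe, mem_filter, mem_univ, true_and] at hj ⊢
    obtain ⟨h1, h2, h3⟩ := hj
    refine ⟨by simp [pv]; omega, h2, h3⟩
  · intro p hp
    simp only [Finset.mem_coe, mem_filter, mem_univ, true_and] at hp
    obtain ⟨h1, _, _⟩ := hp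
    ext
    · simp [pv, h1]
    · rfl
  · intro j hj; rfl


lemma card_range_filter_odd (N : ℕ) :
    ((Finset.range (2*N)).filter (fun v => Odd v)).card = N := by
  induction N with
  | zero => simp
  | succ N ih =>
    have h2 : 2*(N+1) = (2*N + 1) + 1 := by ring
    rw [h2, Finset.range_add_one, Finset.range_add_one, Finset.filter_insert, Finset.filter_insert]
    have ho : Odd (2*N+1) := ⟨N, by ring⟩
    have he : ¬ Odd (2*N) := by simp [Nat.odd_iff]
    rw [if_pos ho, if_neg he, Finset.card_insert_of_notMem (by simp)]
    omega

lemma card_evens (N : ℕ) :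
    ((Finset.univ : Finset (Fin (2*N))).filter (fun v : Fin (2*N) => Even ((v:ℕ)+1))).card = N := by
  refine Eq.trans ?_ (card_range_filter_odd N)
  refine Finset.card_nbij (fun v : Fin (2*N) => (v:ℕ)) ?_ ?_ ?_
  · intro a ha
    simp only [Finset.mem_coe, mem_filter, mem_univ, true_and, Finset.mem_range] at ha ⊢
    rw [Nat.even_add_one, Nat.not_even_iff_odd] at ha
    exact ⟨a.2, ha⟩
  · intro a _ b _ h; exact Fin.ext h
  · intro v hv
    simp only [Finset.coe_filter, Finset.mem_range, Set.mem_image, Set.mem_setOf_eq,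
      mem_univ, true_and, mem_coe, Finset.mem_filter] at hv ⊢
    obtain ⟨hlt, hodd⟩ := hv
    exact ⟨⟨v, hlt⟩, by rw [Nat.even_add_one, Nat.not_even_iff_odd]; exact hodd, rfl⟩


def ins {m : ℕ} (p : Fin (m+1)) (τ : Equiv.Perm (Fin m)) : Equiv.Perm (Fin (m+1)) :=
  (finSuccEquiv' p).trans ((Equiv.optionCongr τ).trans finSuccEquivLast.symm)

lemma ins_self {m : ℕ} (p : Fin (m+1)) (τ : Equiv.Perm (Fin m)) :
    ins p τ p = Fin.last m := by
  simp [ins]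

lemma ins_succAbove {m : ℕ} (p : Fin (m+1)) (τ : Equiv.Perm (Fin m)) (j : Fin m) :
    ins p τ (p.succAbove j) = (τ j).castSucc := by
  simp [ins, finSuccEquivLast_symm_some]

lemma ins_lt {m : ℕ} (p : Fin (m+1)) (τ : Equiv.Perm (Fin m)) (i : Fin (m+1))
    (h : (i : ℕ) < (p : ℕ)) (hm : (i : ℕ) < m) :
    ins p τ i = (τ ⟨i, hm⟩).castSucc := by
  have : p.succAbove ⟨(i:ℕ), hm⟩ = i := by
    rw [Fin.succAbove_of_castSucc_lt]
    · apply Fin.ext; simp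
    · rw [Fin.lt_def]; simpa using h
  have h2 := ins_succAbove p τ ⟨(i:ℕ), hm⟩
  rw [this] at h2; exact h2

lemma ins_gt {m : ℕ} (p : Fin (m+1)) (τ : Equiv.Perm (Fin m)) (i : Fin (m+1))
    (h : (p : ℕ) < (i : ℕ)) (hm : (i : ℕ) - 1 < m) :
    ins p τ i = (τ ⟨(i:ℕ) - 1, hm⟩).castSucc := by
  have : p.succAbove ⟨(i:ℕ) - 1, hm⟩ = i := by
    rw [Fin.succAbove_of_le_castSucc]
    · apply Fin.ext; simp; omega
    · rw [Fin.le_def]; simp; omega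
  have h2 := ins_succAbove p τ ⟨(i:ℕ) - 1, hm⟩
  rw [this] at h2; exact h2


def Aset (m : ℕ) (p : Fin (m+1)) (τ : Equiv.Perm (Fin m)) : Finset (Fin m) :=
  Finset.univ.filter (fun i =>
    (i ∈ Sd m τ ∧ (i:ℕ) ≠ (p:ℕ)) ∨ ((i:ℕ) = (p:ℕ) ∧ Even ((τ i:ℕ)+1)))

lemma mem_Sd_iff {m : ℕ} (τ : Equiv.Perm (Fin m)) (i : Fin m) :
    i ∈ Sd m τ ↔ 0 < (i:ℕ) ∧ τ i < τ (pv i) ∧ Even ((τ i : ℕ) + 1) := by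
  simp [Sd]

lemma mem_Sd_ins_iff {m : ℕ} (p : Fin (m+1)) (τ : Equiv.Perm (Fin m)) (i : Fin m) :
    p.succAbove i ∈ Sd (m+1) (ins p τ) ↔ i ∈ Aset m p τ := by
  rcases lt_trichotomy ((i:ℕ)) ((p:ℕ)) with hlt | heq | hgt
  · -- i < p : j = castSucc i
    have hj : p.succAbove i = i.castSucc :=
      Fin.succAbove_of_castSucc_lt p i (by rw [Fin.lt_def]; simpa using hlt)
    have hc : ((p.succAbove i : Fin (m+1)) : ℕ) = (i:ℕ) := by rw [hj]; simp
    have him : (i:ℕ) < m := i.2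
    have h1 : ins p τ (p.succAbove i) = (τ i).castSucc := by
      rw [ins_lt p τ _ (by omega) (by omega)]
      congr 2; apply Fin.ext; simp [hc]
    have hpv : ((pv (p.succAbove i)) : ℕ) = (i:ℕ) - 1 := by simp [pv, hc]
    have h2 : ins p τ (pv (p.succAbove i)) = (τ (pv i)).castSucc := by
      rw [ins_lt p τ _ (by omega) (by omega)]
      congr 2; apply Fin.ext; simp [pv]; omega
    rw [mem_Sd_iff, h1, h2, hc]
    simp only [Aset, Finset.mem_filter, Finset.mem_univ, true_and]
    rw [Fin.castSucc_lt_castSucc_iff]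
    simp only [Fin.coe_castSucc]
    constructor
    · intro h; exact Or.inl ⟨(mem_Sd_iff τ i).mpr h, by omega⟩
    · rintro (⟨h, _⟩ | ⟨h, _⟩)
      · exact (mem_Sd_iff τ i).mp h
      · omega
  · -- i = p : j = succ i
    have hpm : (p:ℕ) < m := by omega
    have hj : p.succAbove i = i.succ :=
      Fin.succAbove_of_le_castSucc p i (by rw [Fin.le_def]; simp; omega)
    have hc : ((p.succAbove i : Fin (m+1)) : ℕ) = (i:ℕ) + 1 := by rw [hj]; simp
    have hpv : ((pv (p.succAbove i)) : ℕ) = (p:ℕ) := by simp [pv, hc]; omega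
    have hpvp : pv (p.succAbove i) = p := Fin.ext hpv
    have h2 : ins p τ (pv (p.succAbove i)) = Fin.last m := by rw [hpvp, ins_self]
    have h1 : ins p τ (p.succAbove i) = (τ i).castSucc := by
      rw [ins_gt p τ _ (by omega) (by omega)]
      congr 2; apply Fin.ext; simp [hc]
    rw [mem_Sd_iff, h1, h2, hc]
    simp only [Aset, Finset.mem_filter, Finset.mem_univ, true_and]
    constructor
    · intro ⟨_, _, h3⟩
      exact Or.inr ⟨heq, by simpa using h3⟩
    · rintro (⟨_, h⟩ | ⟨_, h⟩)
      · omega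
      · exact ⟨by omega, Fin.castSucc_lt_last _, by simpa using h⟩
  · -- i > p : j = succ i
    have hj : p.succAbove i = i.succ :=
      Fin.succAbove_of_le_castSucc p i (by rw [Fin.le_def]; simp; omega)
    have hc : ((p.succAbove i : Fin (m+1)) : ℕ) = (i:ℕ) + 1 := by rw [hj]; simp
    have h1 : ins p τ (p.succAbove i) = (τ i).castSucc := by
      rw [ins_gt p τ _ (by omega) (by omega)]
      congr 2; apply Fin.ext; simp [hc]
    have hpv : ((pv (p.succAbove i)) : ℕ) = (i:ℕ) := by simp [pv, hc]
    have h2 : ins p τ (pv (p.succAbove i)) = (τ (pv i)).castSucc := by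
      rw [ins_gt p τ _ (by omega) (by omega)]
      congr 2; apply Fin.ext; simp [pv]; omega
    rw [mem_Sd_iff, h1, h2, hc]
    simp only [Aset, Finset.mem_filter, Finset.mem_univ, true_and]
    rw [Fin.castSucc_lt_castSucc_iff]
    simp only [Fin.coe_castSucc]
    constructor
    · intro ⟨_, h2', h3⟩
      exact Or.inl ⟨(mem_Sd_iff τ i).mpr ⟨by omega, h2', h3⟩, by omega⟩
    · rintro (⟨h, _⟩ | ⟨h, _⟩)
      · have := (mem_Sd_iff τ i).mp h
        exact ⟨by omega, this.2.1, this.2.2⟩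
      · omega


lemma Sd_ins_eq {m : ℕ} (p : Fin (m+1)) (τ : Equiv.Perm (Fin m)) :
    Sd (m+1) (ins p τ) = (Aset m p τ).image p.succAbove := by
  ext j
  constructor
  · intro hj
    have hne : j ≠ p := by
      rintro rfl
      rw [mem_Sd_iff, ins_self] at hj
      exact absurd hj.2.1 (not_lt.mpr (Fin.le_last _))
    obtain ⟨i, rfl⟩ := Fin.exists_succAbove_eq hne
    exact Finset.mem_image_of_mem _ ((mem_Sd_ins_iff p τ i).mp hj)
  · intro hj
    obtain ⟨i, hi, rfl⟩ := Finset.mem_image.mp hj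
    exact (mem_Sd_ins_iff p τ i).mpr hi

/-- increment indicator -/
def incr {m : ℕ} (p : Fin (m+1)) (τ : Equiv.Perm (Fin m)) : ℕ :=
  if h : (p:ℕ) < m then
    (if Even ((τ ⟨(p:ℕ), h⟩ : ℕ) + 1) ∧ ⟨(p:ℕ), h⟩ ∉ Sd m τ then 1 else 0)
  else 0

lemma card_Sd_ins {m : ℕ} (p : Fin (m+1)) (τ : Equiv.Perm (Fin m)) :
    (Sd (m+1) (ins p τ)).card = (Sd m τ).card + incr p τ := by
  rw [Sd_ins_eq, Finset.card_image_of_injective _ (Fin.succAbove_right_injective)]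
  by_cases h : (p:ℕ) < m
  · set q : Fin m := ⟨(p:ℕ), h⟩ with hq
    have hco : ∀ i : Fin m, (i:ℕ) = (p:ℕ) ↔ i = q := by
      intro i; constructor
      · intro hh; exact Fin.ext hh
      · rintro rfl; rfl
    by_cases he : Even ((τ q : ℕ) + 1)
    · have hA : Aset m p τ = insert q (Sd m τ) := by
        ext i
        simp only [Aset, Finset.mem_filter, Finset.mem_univ, true_and, Finset.mem_insert]
        constructor
        · rintro (⟨hs, hne⟩ | ⟨hep, _⟩)
          · exact Or.inr hs
          · exact Or.inl ((hco i).mp hep)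
        · rintro (rfl | hs)
          · exact Or.inr ⟨rfl, he⟩
          · by_cases hip : (i:ℕ) = (p:ℕ)
            · exact Or.inr ⟨hip, by rw [(hco i).mp hip]; exact he⟩
            · exact Or.inl ⟨hs, hip⟩
      rw [hA, incr, dif_pos h, Finset.card_insert_eq_ite]
      by_cases hmem : q ∈ Sd m τ
      · rw [if_pos hmem, if_neg (by tauto)]; ring
      · rw [if_neg hmem, if_pos ⟨he, hmem⟩]
    · have hA : Aset m p τ = Sd m τ := by
        ext i
        simp only [Aset, Finset.mem_filter, Finset.mem_univ, true_and]
        constructor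
        · rintro (⟨hs, _⟩ | ⟨hep, hee⟩)
          · exact hs
          · exact absurd (by rw [(hco i).mp hep] at hee; exact hee) he
        · intro hs
          by_cases hip : (i:ℕ) = (p:ℕ)
          · exfalso
            apply he
            rw [← (hco i).mp hip] at he ⊢
            exact ((mem_Sd_iff τ i).mp hs).2.2
          · exact Or.inl ⟨hs, hip⟩
      rw [hA, incr, dif_pos h, if_neg (by tauto)]; ring
  · have hA : Aset m p τ = Sd m τ := by
      ext i
      simp only [Aset, Finset.mem_filter, Finset.mem_univ, true_and]
      have : (i:ℕ) ≠ (p:ℕ) := by have := i.2; omega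
      tauto
    rw [hA, incr, dif_neg h]; ring

lemma desEndE_ins {m : ℕ} (p : Fin (m+1)) (τ : Equiv.Perm (Fin m)) :
    desEndE (m+1) (ins p τ) = desEndE m τ + incr p τ := by
  rw [desEndE_eq_card_Sd, desEndE_eq_card_Sd, card_Sd_ins]


lemma ins_injective {m : ℕ} :
    Function.Injective (fun x : Fin (m+1) × Equiv.Perm (Fin m) => ins x.1 x.2) := by
  rintro ⟨p, τ⟩ ⟨p', τ'⟩ h
  simp only at h
  have hp : p = p' := by
    by_contra hne
    obtain ⟨i, hi⟩ := Fin.exists_succAbove_eq (Ne.symm hne)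
    have h1 : ins p τ p' = Fin.last m := by rw [h, ins_self]
    rw [← hi, ins_succAbove] at h1
    exact absurd h1 (Fin.castSucc_lt_last _).ne
  subst hp
  have hτ : τ = τ' := by
    apply Equiv.ext
    intro j
    have := congrArg (fun σ : Equiv.Perm (Fin (m+1)) => σ (p.succAbove j)) h
    simp only [ins_succAbove] at this
    exact Fin.castSucc_injective _ this
  rw [hτ]

lemma ins_bijective {m : ℕ} :
    Function.Bijective (fun x : Fin (m+1) × Equiv.Perm (Fin m) => ins x.1 x.2) := by
  rw [Fintype.bijective_iff_injective_and_card]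
  refine ⟨ins_injective, ?_⟩
  simp [Fintype.card_perm, Nat.factorial_succ]

lemma card_filter_perm {m : ℕ} (P : Equiv.Perm (Fin (m+1)) → Prop) [DecidablePred P] :
    (Finset.univ.filter P).card
      = ∑ τ : Equiv.Perm (Fin m), (Finset.univ.filter (fun p : Fin (m+1) => P (ins p τ))).card := by
  have h1 : (Finset.univ.filter P).card
      = (Finset.univ.filter (fun x : Fin (m+1) × Equiv.Perm (Fin m) => P (ins x.1 x.2))).card := by
    refine (Finset.card_nbij (fun x => ins x.1 x.2) ?_ ?_ ?_).symm
    · intro x hx; simp only [Finset.mem_coe, mem_filter, mem_univ, true_and] at hx ⊢; exact hx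
    · intro a _ b _ hab; exact ins_injective hab
    · intro σ hσ
      simp only [coe_filter, mem_univ, true_and, Set.mem_setOf_eq] at hσ ⊢
      obtain ⟨x, hx⟩ := ins_bijective.surjective σ
      exact ⟨x, by simp [hx, hσ]⟩
  rw [h1]
  rw [Finset.card_eq_sum_card_fiberwise (f := Prod.snd) (t := Finset.univ) (by intros; simp)]
  apply Finset.sum_congr rfl
  intro τ _
  apply Finset.card_nbij (fun x => x.1)
  · intro x hx
    simp only [Finset.mem_coe, mem_filter, mem_univ, true_and] at hx ⊢
    obtain ⟨h1, h2⟩ := hx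
    rw [← h2]; exact h1
  · intro a ha b hb hab
    simp only [coe_filter, mem_univ, true_and, Set.mem_setOf_eq] at ha hb
    ext
    · exact congrArg Fin.val hab
    · simp [ha.2, hb.2]
  · intro p hp
    simp only [coe_filter, mem_univ, true_and, Set.mem_setOf_eq] at hp ⊢
    exact ⟨(p, τ), ⟨Finset.mem_filter.mpr ⟨Finset.mem_univ _, hp⟩, rfl⟩, rfl⟩


lemma incr_le_one {m : ℕ} (p : Fin (m+1)) (τ : Equiv.Perm (Fin m)) :
    incr p τ = 0 ∨ incr p τ = 1 := by
  unfold incr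
  split_ifs <;> simp

def Dset (m : ℕ) (τ : Equiv.Perm (Fin m)) : Finset (Fin m) :=
  Finset.univ.filter (fun i => Even ((τ i : ℕ) + 1) ∧ i ∉ Sd m τ)

lemma Sd_subset_evens {m : ℕ} (τ : Equiv.Perm (Fin m)) :
    Sd m τ ⊆ Finset.univ.filter (fun i => Even ((τ i : ℕ) + 1)) := by
  intro i hi
  rw [mem_Sd_iff] at hi
  simp [hi.2.2]

lemma card_evens_perm {m : ℕ} (τ : Equiv.Perm (Fin m)) :
    (Finset.univ.filter (fun i => Even ((τ i : ℕ) + 1))).card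
      = (Finset.univ.filter (fun v : Fin m => Even ((v : ℕ) + 1))).card := by
  apply Finset.card_nbij (fun i => τ i)
  · intro i hi; simp only [Finset.mem_coe, mem_filter, mem_univ, true_and] at hi ⊢; exact hi
  · intro a _ b _ h; exact τ.injective h
  · intro v hv
    simp only [coe_filter, mem_univ, true_and, Set.mem_setOf_eq] at hv ⊢
    exact ⟨τ.symm v, by simpa using hv, by simp⟩

lemma card_Dset {m : ℕ} (τ : Equiv.Perm (Fin m)) :
    (Dset m τ).card
      = (Finset.univ.filter (fun v : Fin m => Even ((v : ℕ) + 1))).card - (Sd m τ).card := by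
  have : Dset m τ = (Finset.univ.filter (fun i => Even ((τ i : ℕ) + 1))) \ Sd m τ := by
    ext i; simp [Dset, Finset.mem_sdiff]
  rw [this, Finset.card_sdiff_of_subset (Sd_subset_evens τ), card_evens_perm]

lemma incr_eq_one_iff {m : ℕ} (p : Fin (m+1)) (τ : Equiv.Perm (Fin m)) :
    incr p τ = 1 ↔ ∃ h : (p:ℕ) < m, Even ((τ ⟨(p:ℕ), h⟩ : ℕ) + 1) ∧ ⟨(p:ℕ), h⟩ ∉ Sd m τ := by
  unfold incr
  split_ifs with h h2
  · simp only [eq_self_iff_true, true_iff]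
    exact ⟨h, h2⟩
  · constructor
    · intro hh; simp at hh
    · rintro ⟨h', hh⟩
      exact absurd (by convert hh) h2
  · constructor
    · intro hh; simp at hh
    · rintro ⟨h', _⟩; exact absurd h' h

lemma card_incr_one {m : ℕ} (τ : Equiv.Perm (Fin (m+1))) :
    (Finset.univ.filter (fun p : Fin (m+2) => incr p τ = 1)).card = (Dset (m+1) τ).card := by
  apply Finset.card_nbij (fun p : Fin (m+2) => (⟨(p : ℕ) % (m+1), Nat.mod_lt _ (Nat.succ_pos _)⟩ : Fin (m+1)))
  · intro p hp
    simp only [Finset.mem_coe, mem_filter, mem_univ, true_and] at hp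
    obtain ⟨h, h1, h2⟩ := (incr_eq_one_iff p τ).mp hp
    have : (⟨(p : ℕ) % (m+1), Nat.mod_lt _ (Nat.succ_pos _)⟩ : Fin (m+1)) = ⟨(p:ℕ), h⟩ := by
      apply Fin.ext; simp [Nat.mod_eq_of_lt h]
    beta_reduce; rw [this]
    simp only [Finset.mem_coe, Dset, mem_filter, mem_univ, true_and]
    exact ⟨h1, h2⟩
  · intro a ha b hb hab
    simp only [coe_filter, mem_univ, true_and, Set.mem_setOf_eq] at ha hb
    obtain ⟨ha', _⟩ := (incr_eq_one_iff a τ).mp ha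
    obtain ⟨hb', _⟩ := (incr_eq_one_iff b τ).mp hb
    have := congrArg Fin.val hab
    simp only [Nat.mod_eq_of_lt ha', Nat.mod_eq_of_lt hb'] at this
    exact Fin.ext this
  · intro i hi
    simp only [Dset, coe_filter, mem_univ, true_and, Set.mem_setOf_eq, Finset.mem_coe,
      Finset.mem_filter] at hi ⊢
    refine ⟨i.castSucc, ?_, ?_⟩
    · show incr i.castSucc τ = 1
      rw [incr_eq_one_iff]
      refine ⟨by simpa using i.2, ?_, ?_⟩
      · convert hi.1 using 3; exact congrArg τ (Fin.ext (by simp))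
      · convert hi.2 using 2 <;> apply Fin.ext <;> simp
    · apply Fin.ext
      simp [Nat.mod_eq_of_lt i.2]



lemma firstOdd_iff {m : ℕ} (hpos : 0 < m) (σ : Equiv.Perm (Fin m)) :
    firstOdd m σ ↔ Odd ((σ ⟨0, hpos⟩ : ℕ) + 1) := by
  unfold firstOdd
  constructor
  · rintro ⟨i, hi, h⟩
    have : i = ⟨0, hpos⟩ := Fin.ext hi
    rwa [this] at h
  · intro h; exact ⟨⟨0, hpos⟩, rfl, h⟩

lemma firstEven_iff {m : ℕ} (hpos : 0 < m) (σ : Equiv.Perm (Fin m)) :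
    firstEven m σ ↔ Even ((σ ⟨0, hpos⟩ : ℕ) + 1) := by
  unfold firstEven
  constructor
  · rintro ⟨i, hi, h⟩
    have : i = ⟨0, hpos⟩ := Fin.ext hi
    rwa [this] at h
  · intro h; exact ⟨⟨0, hpos⟩, rfl, h⟩

lemma firstEven_iff_not_firstOdd {m : ℕ} (hpos : 0 < m) (σ : Equiv.Perm (Fin m)) :
    firstEven m σ ↔ ¬ firstOdd m σ := by
  rw [firstEven_iff hpos, firstOdd_iff hpos, Nat.even_iff, Nat.odd_iff]
  omega

lemma ins_zero_of_ne {m : ℕ} (hpos : 0 < m) (p : Fin (m+1)) (τ : Equiv.Perm (Fin m))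
    (hp : (p : ℕ) ≠ 0) :
    ins p τ ⟨0, Nat.succ_pos m⟩ = (τ ⟨0, hpos⟩).castSucc := by
  rw [ins_lt p τ _ (by simpa using Nat.pos_of_ne_zero hp) (by simpa using hpos)]

lemma firstOdd_ins {m : ℕ} (hpos : 0 < m) (hm : Even m) (p : Fin (m+1))
    (τ : Equiv.Perm (Fin m)) :
    firstOdd (m+1) (ins p τ) ↔ ((p : ℕ) = 0 ∨ firstOdd m τ) := by
  rw [firstOdd_iff (Nat.succ_pos m)]
  by_cases hp : (p : ℕ) = 0
  · have hp0 : p = ⟨0, Nat.succ_pos m⟩ := Fin.ext hp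
    rw [← hp0, ins_self]
    simp only [Fin.val_last]
    constructor
    · intro _; exact Or.inl hp
    · intro _
      rcases hm with ⟨j, hj⟩
      exact ⟨j, by omega⟩
  · rw [ins_zero_of_ne hpos p τ hp, firstOdd_iff hpos]
    simp only [Fin.coe_castSucc]
    tauto

lemma firstEven_ins {m : ℕ} (hpos : 0 < m) (hm : Even m) (p : Fin (m+1))
    (τ : Equiv.Perm (Fin m)) :
    firstEven (m+1) (ins p τ) ↔ ((p : ℕ) ≠ 0 ∧ firstEven m τ) := by
  rw [firstEven_iff_not_firstOdd (Nat.succ_pos m), firstOdd_ins hpos hm,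
    firstEven_iff_not_firstOdd hpos]
  tauto

lemma incr_zero {m : ℕ} (hpos : 0 < m) (p : Fin (m+1)) (τ : Equiv.Perm (Fin m))
    (hp : (p : ℕ) = 0) :
    incr p τ = if Even ((τ ⟨0, hpos⟩ : ℕ) + 1) then 1 else 0 := by
  unfold incr
  rw [dif_pos (by omega : (p:ℕ) < m)]
  have h0 : (⟨(p:ℕ), by omega⟩ : Fin m) = ⟨0, hpos⟩ := Fin.ext hp
  rw [h0]
  have hnot : (⟨0, hpos⟩ : Fin m) ∉ Sd m τ := by
    rw [mem_Sd_iff]; simp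
  by_cases he : Even ((τ ⟨0, hpos⟩ : ℕ) + 1)
  · rw [if_pos ⟨he, hnot⟩, if_pos he]
  · rw [if_neg (by tauto), if_neg he]


lemma count_incr_zero {m : ℕ} (τ : Equiv.Perm (Fin m)) :
    (Finset.univ.filter (fun p : Fin (m+1) => incr p τ = 0)).card
      = (m+1) - (Finset.univ.filter (fun p : Fin (m+1) => incr p τ = 1)).card := by
  have h := Finset.card_filter_add_card_filter_not
    (s := (Finset.univ : Finset (Fin (m+1)))) (p := fun p => incr p τ = 1)
  have h2 : (Finset.univ.filter (fun p : Fin (m+1) => ¬ incr p τ = 1))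
      = (Finset.univ.filter (fun p : Fin (m+1) => incr p τ = 0)) := by
    ext p
    simp only [Finset.mem_filter, Finset.mem_univ, true_and]
    rcases incr_le_one p τ with h' | h' <;> simp [h']
  rw [h2] at h
  simp only [Finset.card_univ, Fintype.card_fin] at h
  omega

lemma count_shift {m : ℕ} (τ : Equiv.Perm (Fin m)) (k' k : ℕ) :
    (Finset.univ.filter (fun p : Fin (m+1) => k' + incr p τ = k)).card
      = (if k = k' then
          (m+1) - (Finset.univ.filter (fun p : Fin (m+1) => incr p τ = 1)).card else 0)
        + (if k = k' + 1 then
          (Finset.univ.filter (fun p : Fin (m+1) => incr p τ = 1)).card else 0) := by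
  by_cases h1 : k = k'
  · subst h1
    rw [if_pos rfl, if_neg (by omega)]
    have : (Finset.univ.filter (fun p : Fin (m+1) => k + incr p τ = k))
        = (Finset.univ.filter (fun p : Fin (m+1) => incr p τ = 0)) := by
      ext p; simp only [Finset.mem_filter, Finset.mem_univ, true_and]; omega
    rw [this, count_incr_zero]
    omega
  · rw [if_neg h1]
    by_cases h2 : k = k' + 1
    · subst h2
      rw [if_pos rfl]
      have : (Finset.univ.filter (fun p : Fin (m+1) => k' + incr p τ = k' + 1))
          = (Finset.univ.filter (fun p : Fin (m+1) => incr p τ = 1)) := by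
        ext p; simp only [Finset.mem_filter, Finset.mem_univ, true_and]; omega
      rw [this]
      omega
    · rw [if_neg h2]
      convert Finset.card_empty
      rw [Finset.filter_eq_empty_iff]
      intro p _
      rcases incr_le_one p τ with h' | h' <;> omega


lemma card_incr_one' {m : ℕ} (hpos : 0 < m) (τ : Equiv.Perm (Fin m)) :
    (Finset.univ.filter (fun p : Fin (m+1) => incr p τ = 1)).card = (Dset m τ).card := by
  cases m with
  | zero => omega
  | succ m' => exact card_incr_one τ

lemma desEndE_le {n : ℕ} (τ : Equiv.Perm (Fin (2*n))) : desEndE (2*n) τ ≤ n := by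
  rw [desEndE_eq_card_Sd]
  calc (Sd (2*n) τ).card ≤ _ := Finset.card_le_card (Sd_subset_evens τ)
    _ = n := by rw [card_evens_perm, card_evens]

lemma I_eq {n : ℕ} (τ : Equiv.Perm (Fin (2*n))) :
    (Finset.univ.filter (fun p : Fin (2*n+1) => incr p τ = 1)).card
      = n - desEndE (2*n) τ := by
  rcases Nat.eq_zero_or_pos n with rfl | hn
  · simp only [Nat.mul_zero]
    have : ∀ p : Fin 1, incr p τ ≠ 1 := by
      intro p
      unfold incr
      rw [dif_neg (by omega)]
      omega
    simp [Finset.filter_eq_empty_iff.mpr (fun p _ => this p)]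
  · rw [card_incr_one' (by omega) τ, card_Dset, desEndE_eq_card_Sd, card_evens]

lemma desEndE_lt_of_firstEven {n : ℕ} (hn : 1 ≤ n) (τ : Equiv.Perm (Fin (2*n)))
    (hfe : firstEven (2*n) τ) : desEndE (2*n) τ + 1 ≤ n := by
  have hpos : 0 < 2*n := by omega
  have hss : Sd (2*n) τ ⊂ Finset.univ.filter (fun i => Even ((τ i : ℕ) + 1)) := by
    rw [Finset.ssubset_iff_of_subset (Sd_subset_evens τ)]
    refine ⟨⟨0, hpos⟩, ?_, ?_⟩
    · simp only [Finset.mem_filter, Finset.mem_univ, true_and]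
      exact (firstEven_iff hpos τ).mp hfe
    · rw [mem_Sd_iff]; simp
  have := Finset.card_lt_card hss
  rw [card_evens_perm, card_evens] at this
  rw [desEndE_eq_card_Sd]
  omega

lemma P0_big_zero {n j : ℕ} (hj : n < j) : P0 j (2*n) = 0 := by
  rw [P0, Finset.card_eq_zero, Finset.filter_eq_empty_iff]
  rintro τ _ ⟨_, hd⟩
  have := desEndE_le τ
  omega

lemma P1_big_zero {n j : ℕ} (hn : 1 ≤ n) (hj : n ≤ j) : P1 j (2*n) = 0 := by
  rw [P1, Finset.card_eq_zero, Finset.filter_eq_empty_iff]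
  rintro τ _ ⟨hfe, hd⟩
  have := desEndE_lt_of_firstEven hn τ hfe
  omega


theorem P0_rec (n k : ℕ) (hn : 1 ≤ n) :
    P0 k (2*n+1) = (n+k+1) * P0 k (2*n)
      + (if k = 0 then 0 else P1 (k-1) (2*n) + (n+1-k) * P0 (k-1) (2*n)) := by
  have hpos : 0 < 2*n := by omega
  have hme : Even (2*n) := ⟨n, by ring⟩
  have hsum : P0 k (2*n+1) = ∑ τ : Equiv.Perm (Fin (2*n)),
      (Finset.univ.filter (fun p : Fin (2*n+1) =>
        firstOdd (2*n+1) (ins p τ) ∧ desEndE (2*n+1) (ins p τ) = k)).card := by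
    rw [P0]
    exact card_filter_perm _
  rw [hsum,
    ← Finset.sum_filter_add_sum_filter_not Finset.univ (fun τ => firstOdd (2*n) τ)]
  have hFOsum : ∑ τ ∈ Finset.univ.filter (fun τ : Equiv.Perm (Fin (2*n)) => firstOdd (2*n) τ),
      (Finset.univ.filter (fun p : Fin (2*n+1) =>
        firstOdd (2*n+1) (ins p τ) ∧ desEndE (2*n+1) (ins p τ) = k)).card
      = ∑ τ ∈ Finset.univ.filter (fun τ : Equiv.Perm (Fin (2*n)) => firstOdd (2*n) τ),
        ((if desEndE (2*n) τ = k then n+k+1 else 0)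
          + (if desEndE (2*n) τ + 1 = k then n+1-k else 0)) := by
    apply Finset.sum_congr rfl
    intro τ hτ
    rw [Finset.mem_filter] at hτ
    have hFO := hτ.2
    have hflt : (Finset.univ.filter (fun p : Fin (2*n+1) =>
        firstOdd (2*n+1) (ins p τ) ∧ desEndE (2*n+1) (ins p τ) = k))
        = (Finset.univ.filter (fun p : Fin (2*n+1) => desEndE (2*n) τ + incr p τ = k)) := by
      ext p
      simp only [Finset.mem_filter, Finset.mem_univ, true_and]
      rw [firstOdd_ins hpos hme, desEndE_ins]
      tauto
    rw [hflt, count_shift, I_eq]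
    have hle := desEndE_le τ
    split_ifs <;> omega
  have hFEsum : ∑ τ ∈ Finset.univ.filter (fun τ : Equiv.Perm (Fin (2*n)) => ¬ firstOdd (2*n) τ),
      (Finset.univ.filter (fun p : Fin (2*n+1) =>
        firstOdd (2*n+1) (ins p τ) ∧ desEndE (2*n+1) (ins p τ) = k)).card
      = ∑ τ ∈ Finset.univ.filter (fun τ : Equiv.Perm (Fin (2*n)) => ¬ firstOdd (2*n) τ),
        (if desEndE (2*n) τ + 1 = k then 1 else 0) := by
    apply Finset.sum_congr rfl
    intro τ hτ
    rw [Finset.mem_filter] at hτ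
    have hFE : firstEven (2*n) τ := (firstEven_iff_not_firstOdd hpos τ).mpr hτ.2
    have hi0 : ∀ p : Fin (2*n+1), (p:ℕ) = 0 → incr p τ = 1 := by
      intro p hp
      rw [incr_zero hpos p τ hp, if_pos ((firstEven_iff hpos τ).mp hFE)]
    have hflt : (Finset.univ.filter (fun p : Fin (2*n+1) =>
        firstOdd (2*n+1) (ins p τ) ∧ desEndE (2*n+1) (ins p τ) = k))
        = (Finset.univ.filter (fun p : Fin (2*n+1) =>
            (p:ℕ) = 0 ∧ desEndE (2*n) τ + incr p τ = k)) := by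
      ext p
      simp only [Finset.mem_filter, Finset.mem_univ, true_and]
      rw [firstOdd_ins hpos hme, desEndE_ins]
      tauto
    rw [hflt]
    by_cases hk : desEndE (2*n) τ + 1 = k
    · rw [if_pos hk]
      have : (Finset.univ.filter (fun p : Fin (2*n+1) =>
          (p:ℕ) = 0 ∧ desEndE (2*n) τ + incr p τ = k)) = {⟨0, by omega⟩} := by
        ext p
        simp only [Finset.mem_filter, Finset.mem_univ, true_and, Finset.mem_singleton]
        constructor
        · rintro ⟨hp, _⟩; exact Fin.ext hp
        · rintro rfl
          exact ⟨rfl, by rw [hi0 _ rfl]; omega⟩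
      rw [this, Finset.card_singleton]
    · rw [if_neg hk]
      convert Finset.card_empty
      rw [Finset.filter_eq_empty_iff]
      rintro p _ ⟨hp, hd⟩
      rw [hi0 p hp] at hd
      omega
  rw [hFOsum, hFEsum]
  -- now evaluate the sums
  rw [Finset.sum_add_distrib]
  have e1 : ∑ τ ∈ Finset.univ.filter (fun τ : Equiv.Perm (Fin (2*n)) => firstOdd (2*n) τ),
      (if desEndE (2*n) τ = k then n+k+1 else 0) = (n+k+1) * P0 k (2*n) := by
    rw [Finset.sum_ite, Finset.sum_const, Finset.sum_const_zero, add_zero, smul_eq_mul,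
      Finset.filter_filter, P0]
    rw [mul_comm]
  have e2 : ∑ τ ∈ Finset.univ.filter (fun τ : Equiv.Perm (Fin (2*n)) => firstOdd (2*n) τ),
      (if desEndE (2*n) τ + 1 = k then n+1-k else 0)
      = (if k = 0 then 0 else (n+1-k) * P0 (k-1) (2*n)) := by
    rw [Finset.sum_ite, Finset.sum_const, Finset.sum_const_zero, add_zero, smul_eq_mul,
      Finset.filter_filter]
    by_cases hk : k = 0
    · rw [if_pos hk]
      have : (Finset.univ.filter (fun τ : Equiv.Perm (Fin (2*n)) =>
          firstOdd (2*n) τ ∧ desEndE (2*n) τ + 1 = k)) = ∅ := by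
        rw [Finset.filter_eq_empty_iff]; rintro τ _ ⟨_, hd⟩; omega
      rw [this]; simp
    · rw [if_neg hk, P0, mul_comm]
      congr 2
      ext τ
      simp only [Finset.mem_filter, Finset.mem_univ, true_and]
      constructor
      · rintro ⟨h1, h2⟩; exact ⟨h1, by omega⟩
      · rintro ⟨h1, h2⟩; exact ⟨h1, by omega⟩
  have e3 : ∑ τ ∈ Finset.univ.filter (fun τ : Equiv.Perm (Fin (2*n)) => ¬ firstOdd (2*n) τ),
      (if desEndE (2*n) τ + 1 = k then 1 else 0)
      = (if k = 0 then 0 else P1 (k-1) (2*n)) := by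
    rw [Finset.sum_ite, Finset.sum_const, Finset.sum_const_zero, add_zero, smul_eq_mul,
      mul_one, Finset.filter_filter]
    by_cases hk : k = 0
    · rw [if_pos hk]
      have : (Finset.univ.filter (fun τ : Equiv.Perm (Fin (2*n)) =>
          ¬ firstOdd (2*n) τ ∧ desEndE (2*n) τ + 1 = k)) = ∅ := by
        rw [Finset.filter_eq_empty_iff]; rintro τ _ ⟨_, hd⟩; omega
      rw [this]; simp
    · rw [if_neg hk, P1]
      congr 1
      ext τ
      simp only [Finset.mem_filter, Finset.mem_univ, true_and]
      rw [firstEven_iff_not_firstOdd hpos τ]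
      constructor
      · rintro ⟨h1, h2⟩; exact ⟨h1, by omega⟩
      · rintro ⟨h1, h2⟩; exact ⟨h1, by omega⟩
  rw [e1, e2, e3]
  by_cases hk : k = 0
  · rw [if_pos hk, if_pos hk, if_pos hk]
  · rw [if_neg hk, if_neg hk, if_neg hk]
    ring


theorem P1_rec (n k : ℕ) (hn : 1 ≤ n) :
    P1 k (2*n+1) = (n+k+1) * P1 k (2*n)
      + (if k = 0 then 0 else (n-k) * P1 (k-1) (2*n)) := by
  have hpos : 0 < 2*n := by omega
  have hme : Even (2*n) := ⟨n, by ring⟩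
  have hsum : P1 k (2*n+1) = ∑ τ : Equiv.Perm (Fin (2*n)),
      (Finset.univ.filter (fun p : Fin (2*n+1) =>
        firstEven (2*n+1) (ins p τ) ∧ desEndE (2*n+1) (ins p τ) = k)).card := by
    rw [P1]
    exact card_filter_perm _
  rw [hsum,
    ← Finset.sum_filter_add_sum_filter_not Finset.univ (fun τ => firstEven (2*n) τ)]
  have hFEsum : ∑ τ ∈ Finset.univ.filter (fun τ : Equiv.Perm (Fin (2*n)) => firstEven (2*n) τ),
      (Finset.univ.filter (fun p : Fin (2*n+1) =>
        firstEven (2*n+1) (ins p τ) ∧ desEndE (2*n+1) (ins p τ) = k)).card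
      = ∑ τ ∈ Finset.univ.filter (fun τ : Equiv.Perm (Fin (2*n)) => firstEven (2*n) τ),
        ((if desEndE (2*n) τ = k then n+k+1 else 0)
          + (if desEndE (2*n) τ + 1 = k then n-k else 0)) := by
    apply Finset.sum_congr rfl
    intro τ hτ
    rw [Finset.mem_filter] at hτ
    have hFE := hτ.2
    have hlt := desEndE_lt_of_firstEven hn τ hFE
    have hi0 : ∀ p : Fin (2*n+1), (p:ℕ) = 0 → incr p τ = 1 := by
      intro p hp
      rw [incr_zero hpos p τ hp, if_pos ((firstEven_iff hpos τ).mp hFE)]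
    have hflt : (Finset.univ.filter (fun p : Fin (2*n+1) =>
        firstEven (2*n+1) (ins p τ) ∧ desEndE (2*n+1) (ins p τ) = k))
        = (Finset.univ.filter (fun p : Fin (2*n+1) =>
            (p:ℕ) ≠ 0 ∧ desEndE (2*n) τ + incr p τ = k)) := by
      ext p
      simp only [Finset.mem_filter, Finset.mem_univ, true_and]
      rw [firstEven_ins hpos hme, desEndE_ins]
      tauto
    rw [hflt]
    by_cases h1 : desEndE (2*n) τ = k
    · rw [if_pos h1, if_neg (by omega)]
      have heq : (Finset.univ.filter (fun p : Fin (2*n+1) =>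
          (p:ℕ) ≠ 0 ∧ desEndE (2*n) τ + incr p τ = k))
          = (Finset.univ.filter (fun p : Fin (2*n+1) => incr p τ = 0)) := by
        ext p
        simp only [Finset.mem_filter, Finset.mem_univ, true_and]
        constructor
        · rintro ⟨_, hd⟩; omega
        · intro h0
          refine ⟨?_, by omega⟩
          intro hp0
          rw [hi0 p hp0] at h0
          omega
      rw [heq, count_incr_zero, I_eq]
      have hle := desEndE_le τ
      omega
    · rw [if_neg h1]
      by_cases h2 : desEndE (2*n) τ + 1 = k
      · rw [if_pos h2]
        have heq : (Finset.univ.filter (fun p : Fin (2*n+1) =>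
            (p:ℕ) ≠ 0 ∧ desEndE (2*n) τ + incr p τ = k))
            = (Finset.univ.filter (fun p : Fin (2*n+1) => incr p τ = 1)).erase ⟨0, by omega⟩ := by
          ext p
          simp only [Finset.mem_filter, Finset.mem_univ, true_and, Finset.mem_erase]
          constructor
          · rintro ⟨hne, hd⟩
            refine ⟨fun hh => hne (by rw [hh]), by omega⟩
          · rintro ⟨hne, h1'⟩
            refine ⟨fun hh => hne (Fin.ext hh), by omega⟩
        rw [heq, Finset.card_erase_of_mem, I_eq]
        · have hle := desEndE_le τ
          omega
        · simp only [Finset.mem_filter, Finset.mem_univ, true_and]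
          exact hi0 _ rfl
      · rw [if_neg h2]
        convert Finset.card_empty
        rw [Finset.filter_eq_empty_iff]
        rintro p _ ⟨hne, hd⟩
        rcases incr_le_one p τ with h' | h' <;> omega
  have hNsum : ∑ τ ∈ Finset.univ.filter
      (fun τ : Equiv.Perm (Fin (2*n)) => ¬ firstEven (2*n) τ),
      (Finset.univ.filter (fun p : Fin (2*n+1) =>
        firstEven (2*n+1) (ins p τ) ∧ desEndE (2*n+1) (ins p τ) = k)).card = 0 := by
    apply Finset.sum_eq_zero
    intro τ hτ
    rw [Finset.mem_filter] at hτ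
    rw [Finset.card_eq_zero, Finset.filter_eq_empty_iff]
    rintro p _ ⟨hfe, _⟩
    rw [firstEven_ins hpos hme] at hfe
    exact hτ.2 hfe.2
  rw [hFEsum, hNsum, add_zero, Finset.sum_add_distrib]
  have e1 : ∑ τ ∈ Finset.univ.filter (fun τ : Equiv.Perm (Fin (2*n)) => firstEven (2*n) τ),
      (if desEndE (2*n) τ = k then n+k+1 else 0) = (n+k+1) * P1 k (2*n) := by
    rw [Finset.sum_ite, Finset.sum_const, Finset.sum_const_zero, add_zero, smul_eq_mul,
      Finset.filter_filter, P1, mul_comm]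
  have e2 : ∑ τ ∈ Finset.univ.filter (fun τ : Equiv.Perm (Fin (2*n)) => firstEven (2*n) τ),
      (if desEndE (2*n) τ + 1 = k then n-k else 0)
      = (if k = 0 then 0 else (n-k) * P1 (k-1) (2*n)) := by
    rw [Finset.sum_ite, Finset.sum_const, Finset.sum_const_zero, add_zero, smul_eq_mul,
      Finset.filter_filter]
    by_cases hk : k = 0
    · rw [if_pos hk]
      have : (Finset.univ.filter (fun τ : Equiv.Perm (Fin (2*n)) =>
          firstEven (2*n) τ ∧ desEndE (2*n) τ + 1 = k)) = ∅ := by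
        rw [Finset.filter_eq_empty_iff]; rintro τ _ ⟨_, hd⟩; omega
      rw [this]; simp
    · rw [if_neg hk, P1, mul_comm]
      congr 2
      ext τ
      simp only [Finset.mem_filter, Finset.mem_univ, true_and]
      constructor
      · rintro ⟨h1, h2⟩; exact ⟨h1, by omega⟩
      · rintro ⟨h1, h2⟩; exact ⟨h1, by omega⟩
  rw [e1, e2]



end Aux

theorem stmt_5 (n k : ℕ) (hn : 1 ≤ n) :
    (P0 k (2*n+1) : ℤ) = ((n : ℤ) + k + 1) * P0 k (2*n)
        + (if k = 0 then 0 else (P1 (k-1) (2*n) : ℤ))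
        + ((n : ℤ) - k + 1) * (if k = 0 then 0 else (P0 (k-1) (2*n) : ℤ)) ∧
    (P1 k (2*n+1) : ℤ) = ((n : ℤ) + k + 1) * P1 k (2*n)
        + ((n : ℤ) - k) * (if k = 0 then 0 else (P1 (k-1) (2*n) : ℤ)) := by
  constructor
  · rw [P0_rec n k hn]
    by_cases hk : k = 0
    · subst hk; simp
    · rw [if_neg hk, if_neg hk, if_neg hk]
      by_cases hkn : k ≤ n + 1
      · have : ((n+1-k : ℕ) : ℤ) = (n : ℤ) - k + 1 := by
          have := Nat.cast_sub (R := ℤ) hkn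
          push_cast at this ⊢
          omega
        push_cast
        rw [this]
        try ring
      · have h0 : P0 (k-1) (2*n) = 0 := P0_big_zero (by omega)
        rw [h0]
        push_cast
        ring
  · rw [P1_rec n k hn]
    by_cases hk : k = 0
    · subst hk; simp
    · rw [if_neg hk, if_neg hk]
      by_cases hkn : k ≤ n
      · have : ((n-k : ℕ) : ℤ) = (n : ℤ) - k := by
          have := Nat.cast_sub (R := ℤ) hkn
          push_cast at this ⊢
          omega
        push_cast
        rw [this]
        try ring
      · have h0 : P1 (k-1) (2*n) = 0 := P1_big_zero hn (by omega)
        rw [h0]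
        push_cast
        ring



end DescentParity
end
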